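/- Let x_1,…,x_a (a ≥ 3) be points in an axis-parallel square R ⊂ ℝ² of side length b. Then for every 3 ≤ j ≤ a, TSP(x_1,…,x_j; R) ≤ TSP(x_1,…,x_a; R), and moreover TSP(x_1,…,x_a; R) ≤ 5b√a. -/

import Mathlib

open MeasureTheory ProbabilityTheory Filter Finset
open scoped ENNReal Classical

noncomputable section

/-- Length of the closed tour visiting the points of `l` in cyclic order. -/
def tourLength (l : List (ℝ × ℝ)) : ℝ :=
  ((l.zip (l.rotate 1)).map fun p => dist p.1 p.2).sum

/-- TSP length of a finite set of points in the plane: the minimum over spanning cycles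
(cyclic orderings of the points) of the total edge length; `0` if there are at most
two points. -/
def tspLength (P : Finset (ℝ × ℝ)) : ℝ :=
  if P.card ≤ 2 then 0
  else sInf {L : ℝ | ∃ l : List (ℝ × ℝ), l.Nodup ∧ l.toFinset = P ∧ L = tourLength l}

/-- Axis-parallel square with lower-left corner `c` and side length `r`. -/
def square (c : ℝ × ℝ) (r : ℝ) : Set (ℝ × ℝ) := Set.Icc c (c.1 + r, c.2 + r)

def unitSquare : Set (ℝ × ℝ) := square (0, 0) 1

def pLen : List (ℝ × ℝ) → ℝ
  | [] => 0
  | [_] => 0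
  | p :: q :: t => dist p q + pLen (q :: t)

lemma pLen_nonneg : ∀ l, 0 ≤ pLen l
  | [] => le_refl 0
  | [_] => le_refl 0
  | p :: q :: t => add_nonneg dist_nonneg (pLen_nonneg (q :: t))

lemma pLen_le_cons (a b : ℝ × ℝ) (l : List (ℝ × ℝ)) :
    pLen (a :: l) ≤ dist a b + pLen (b :: l) := by
  cases l with
  | nil => simpa [pLen] using dist_nonneg
  | cons c t =>
    show dist a c + pLen (c :: t) ≤ dist a b + (dist b c + pLen (c :: t))
    have := dist_triangle a b c
    linarith

lemma pLen_sublist {t' t : List (ℝ × ℝ)} (hs : List.Sublist t' t) :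
    ∀ p, pLen (p :: t') ≤ pLen (p :: t) := by
  induction hs with
  | slnil => intro p; exact le_refl _
  | cons b hs IH => intro p; exact (IH p).trans (pLen_le_cons p b _)
  | cons_cons b hs IH =>
    intro p
    show dist p b + pLen (b :: _) ≤ dist p b + pLen (b :: _)
    exact add_le_add_right (IH b) _

lemma pLen_append_last : ∀ (t : List (ℝ × ℝ)) (p y : ℝ × ℝ),
    pLen (p :: t ++ [y]) = pLen (p :: t) + dist (t.getLastD p) y
  | [], p, y => by simp [pLen]
  | q :: t, p, y => by
    show dist p q + pLen (q :: t ++ [y]) = dist p q + pLen (q :: t) + _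
    rw [pLen_append_last t q y, List.getLastD_cons]
    ring

lemma pLen_telescope (φ : ℝ × ℝ → ℝ) (C : ℝ) :
    ∀ (t : List (ℝ × ℝ)) (p : ℝ × ℝ),
      List.Chain' (fun u v => dist u v ≤ φ v - φ u + C) (p :: t) →
      pLen (p :: t) ≤ φ (t.getLastD p) - φ p + t.length * C
  | [], p, _ => by simp [pLen]
  | q :: t, p, h => by
    rw [List.Chain', List.isChain_cons_cons] at h
    have IH := pLen_telescope φ C t q h.2
    show dist p q + pLen (q :: t) ≤ _
    rw [List.getLastD_cons]
    have := h.1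
    simp only [List.length_cons]
    push_cast
    linarith

lemma pLen_le_len (b : ℝ) (S : Set (ℝ × ℝ)) (hS : ∀ u ∈ S, ∀ v ∈ S, dist u v ≤ b) :
    ∀ (t : List (ℝ × ℝ)) (p : ℝ × ℝ), (∀ z ∈ p :: t, z ∈ S) →
      pLen (p :: t) ≤ t.length * b
  | [], p, _ => by simp [pLen]
  | q :: t, p, h => by
    have h1 : dist p q ≤ b := hS p (h p (by simp)) q (h q (by simp))
    have IH := pLen_le_len b S hS t q (fun z hz => h z (by simp at hz ⊢; tauto))
    show dist p q + pLen (q :: t) ≤ _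
    simp only [List.length_cons]
    push_cast
    linarith

-- tour lemmas
lemma tour_zip : ∀ (l : List (ℝ × ℝ)) (c : ℝ × ℝ),
    ((l.zip (l.drop 1 ++ [c])).map fun p => dist p.1 p.2).sum = pLen (l ++ [c])
  | [], c => by simp [pLen]
  | [a], c => by simp [pLen]
  | a :: b :: t, c => by
    have IH := tour_zip (b :: t) c
    simp only [List.drop_succ_cons, List.drop_zero] at IH
    show dist a b + ((List.map (fun p => dist p.1 p.2) ((b :: t).zip (t ++ [c]))).sum) = _
    rw [IH]
    simp only [List.cons_append]
    rfl

lemma tourLength_eq (l : List (ℝ × ℝ)) (hl : l ≠ []) :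
    tourLength l = pLen (l ++ [l.headI]) := by
  cases l with
  | nil => exact absurd rfl hl
  | cons a t =>
    have hrot : (a :: t).rotate 1 = t ++ [a] := by
      rw [show (1 : ℕ) = 0 + 1 from rfl, List.rotate_cons_succ, List.rotate_zero]
    show ((List.zip _ _).map _).sum = _
    rw [hrot, show t ++ [a] = (a :: t).drop 1 ++ [a] from rfl]
    exact tour_zip (a :: t) a

lemma tourLength_nonneg (l : List (ℝ × ℝ)) : 0 ≤ tourLength l := by
  apply List.sum_nonneg
  intro x hx
  simp only [List.mem_map] at hx
  obtain ⟨p, _, rfl⟩ := hx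
  exact dist_nonneg

lemma tourLength_rotate_one (l : List (ℝ × ℝ)) :
    tourLength (l.rotate 1) = tourLength l := by
  cases l with
  | nil => rfl
  | cons a t =>
    have hrot : (a :: t).rotate 1 = t ++ [a] := by
      rw [show (1 : ℕ) = 0 + 1 from rfl, List.rotate_cons_succ, List.rotate_zero]
    rw [hrot]
    cases t with
    | nil => rfl
    | cons q t' =>
      rw [tourLength_eq _ (by simp), tourLength_eq _ (by simp)]
      simp only [List.cons_append, List.headI]
      have h1 : pLen (q :: (t' ++ [a]) ++ [q]) = pLen (q :: (t' ++ [a])) + dist ((t' ++ [a]).getLastD q) q :=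
        pLen_append_last _ q q
      have h2 : (t' ++ [a]).getLastD q = a := List.getLastD_concat
      show pLen (q :: (t' ++ [a]) ++ [q]) = pLen (a :: q :: (t' ++ [a]))
      rw [h1, h2, show pLen (a :: q :: (t' ++ [a])) = dist a q + pLen (q :: (t' ++ [a])) from rfl,
        dist_comm a q]
      ring

lemma tourLength_rotate (l : List (ℝ × ℝ)) (k : ℕ) :
    tourLength (l.rotate k) = tourLength l := by
  induction k generalizing l with
  | zero => rw [List.rotate_zero]
  | succ n IH =>
    have : l.rotate (n + 1) = (l.rotate 1).rotate n := by
      rw [List.rotate_rotate, add_comm]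
    rw [this, IH, tourLength_rotate_one]

lemma tspLength_nonneg (P : Finset (ℝ × ℝ)) : 0 ≤ tspLength P := by
  unfold tspLength
  split
  · exact le_refl 0
  · exact Real.sInf_nonneg (by rintro L ⟨l, -, -, rfl⟩; exact tourLength_nonneg l)

lemma tspLength_le_tour (P : Finset (ℝ × ℝ)) (h3 : 2 < P.card)
    (l : List (ℝ × ℝ)) (hnd : l.Nodup) (hfin : l.toFinset = P) :
    tspLength P ≤ tourLength l := by
  unfold tspLength
  rw [if_neg (by omega)]
  exact csInf_le ⟨0, by rintro L ⟨l', -, -, rfl⟩; exact tourLength_nonneg l'⟩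
    ⟨l, hnd, hfin, rfl⟩

/-- shortcutting: for any tour of P and Q ⊆ P with 2 < Q.card, tsp Q ≤ tour -/
lemma tsp_shortcut (P Q : Finset (ℝ × ℝ)) (hQP : Q ⊆ P) (h3 : 2 < Q.card)
    (l : List (ℝ × ℝ)) (hnd : l.Nodup) (hfin : l.toFinset = P) :
    tspLength Q ≤ tourLength l := by
  have hQne : Q.Nonempty := Finset.card_pos.mp (by omega)
  obtain ⟨q, hq⟩ := hQne
  have hql : q ∈ l := by rw [← List.mem_toFinset, hfin]; exact hQP hq
  obtain ⟨s, t, rfl⟩ := List.append_of_mem hql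
  -- rotate so q is first
  have hrot : (s ++ q :: t).rotate s.length = q :: (t ++ s) := by
    rw [List.rotate_eq_drop_append_take (by simp), List.drop_left, List.take_left]
    simp
  have hmperm : List.Perm (q :: (t ++ s)) (s ++ q :: t) := by
    rw [← hrot]; exact List.rotate_perm _ _
  have hmnd : (q :: (t ++ s)).Nodup := hmperm.nodup_iff.mpr hnd
  have hmfin : (q :: (t ++ s)).toFinset = P := by
    rw [List.toFinset_eq_of_perm _ _ hmperm, hfin]
  have hl'eq : q :: (t ++ s).filter (fun z => z ∈ Q) = (q :: (t ++ s)).filter (fun z => z ∈ Q) := by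
    rw [List.filter_cons, if_pos (by simpa using hq)]
  have hl'nd : (q :: (t ++ s).filter (fun z => z ∈ Q)).Nodup := by
    rw [hl'eq]; exact hmnd.filter _
  have hl'fin : (q :: (t ++ s).filter (fun z => z ∈ Q)).toFinset = Q := by
    rw [hl'eq, List.toFinset_filter, hmfin]
    ext z
    simp only [Finset.mem_filter, decide_eq_true_eq]
    exact ⟨fun h => h.2, fun h => ⟨hQP h, h⟩⟩
  have hstep : tourLength (q :: (t ++ s).filter (fun z => z ∈ Q)) ≤ tourLength (q :: (t ++ s)) := by
    rw [tourLength_eq (q :: (t ++ s).filter (fun z => z ∈ Q)) (by simp),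
      tourLength_eq (q :: (t ++ s)) (by simp)]
    show pLen (q :: ((t ++ s).filter (fun z => z ∈ Q) ++ [q])) ≤ pLen (q :: ((t ++ s) ++ [q]))
    have hsub : List.Sublist ((t ++ s).filter (fun z => z ∈ Q)) (t ++ s) :=
      List.filter_sublist
    exact pLen_sublist (hsub.append_right [q]) q
  have hcard : 2 < Q.card := h3
  calc tspLength Q ≤ tourLength (q :: (t ++ s).filter (fun z => z ∈ Q)) :=
      tspLength_le_tour Q hcard _ hl'nd hl'fin
    _ ≤ tourLength (q :: (t ++ s)) := hstep
    _ = tourLength (s ++ q :: t) := by rw [← hrot, tourLength_rotate]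

lemma sq_mem {c : ℝ × ℝ} {b : ℝ} {p : ℝ × ℝ} (hp : p ∈ square c b) :
    c.1 ≤ p.1 ∧ p.1 ≤ c.1 + b ∧ c.2 ≤ p.2 ∧ p.2 ≤ c.2 + b := by
  obtain ⟨⟨h1, h2⟩, h3, h4⟩ := hp
  exact ⟨h1, h3, h2, h4⟩

lemma dist_le_side {c : ℝ × ℝ} {b : ℝ} {p q : ℝ × ℝ}
    (hp : p ∈ square c b) (hq : q ∈ square c b) : dist p q ≤ b := by
  obtain ⟨hp1, hp2, hp3, hp4⟩ := sq_mem hp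
  obtain ⟨hq1, hq2, hq3, hq4⟩ := sq_mem hq
  rw [Prod.dist_eq]
  apply max_le
  · have := Real.dist_le_of_mem_Icc (x' := c.1) (y' := c.1 + b)
      (Set.mem_Icc.mpr ⟨hp1, hp2⟩) (Set.mem_Icc.mpr ⟨hq1, hq2⟩)
    linarith
  · have := Real.dist_le_of_mem_Icc (x' := c.2) (y' := c.2 + b)
      (Set.mem_Icc.mpr ⟨hp3, hp4⟩) (Set.mem_Icc.mpr ⟨hq3, hq4⟩)
    linarith

lemma edge_bound {b h : ℝ} (hb : 0 < b) (hh : 0 < h) {c p q : ℝ × ℝ}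
    (hp : p ∈ square c b) (hq : q ∈ square c b) {sp sq : ℕ}
    (hsp1 : (sp : ℝ) * h ≤ p.2 - c.2) (hsp2 : p.2 - c.2 < ((sp : ℝ) + 1) * h)
    (hsq1 : (sq : ℝ) * h ≤ q.2 - c.2) (hsq2 : q.2 - c.2 < ((sq : ℝ) + 1) * h)
    (hK : 2 * b * sp + p.1 ≤ 2 * b * sq + q.1) :
    dist p q ≤ (2 * b * sq + q.1 + h * sq) - (2 * b * sp + p.1 + h * sp) + h := by
  obtain ⟨hp1, hp2, hp3, hp4⟩ := sq_mem hp
  obtain ⟨hq1, hq2, hq3, hq4⟩ := sq_mem hq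
  have hST : sp ≤ sq := by
    by_contra hcon
    push_neg at hcon
    have : (sq : ℝ) + 1 ≤ sp := by exact_mod_cast hcon
    nlinarith
  have hcases : (sp : ℝ) = sq ∨ (sp : ℝ) + 1 ≤ sq := by
    rcases lt_or_eq_of_le hST with h' | h'
    · right; exact_mod_cast h'
    · left; exact_mod_cast h'
  rw [Prod.dist_eq]
  apply max_le <;> rw [Real.dist_eq, abs_sub_le_iff] <;> constructor <;>
    rcases hcases with hc | hc <;> nlinarith

/-- strip index -/
def stripIdx (c : ℝ × ℝ) (h : ℝ) (p : ℝ × ℝ) : ℕ := ⌊(p.2 - c.2) / h⌋₊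

lemma strip_facts {c : ℝ × ℝ} {b h : ℝ} (hh : 0 < h) {p : ℝ × ℝ} (hp : p ∈ square c b) :
    (stripIdx c h p : ℝ) * h ≤ p.2 - c.2 ∧ p.2 - c.2 < ((stripIdx c h p : ℝ) + 1) * h := by
  have h0 : 0 ≤ (p.2 - c.2) / h := div_nonneg (by linarith [(sq_mem hp).2.2.1]) hh.le
  constructor
  · have := Nat.floor_le h0
    have h1 : (stripIdx c h p : ℝ) * h ≤ ((p.2 - c.2) / h) * h :=
      mul_le_mul_of_nonneg_right this hh.le
    have h2 : ((p.2 - c.2) / h) * h = p.2 - c.2 := div_mul_cancel₀ _ hh.ne'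
    linarith
  · have := Nat.lt_floor_add_one ((p.2 - c.2) / h)
    have h1 : ((p.2 - c.2) / h) * h < ((stripIdx c h p : ℝ) + 1) * h :=
      mul_lt_mul_of_pos_right this hh
    have h2 : ((p.2 - c.2) / h) * h = p.2 - c.2 := div_mul_cancel₀ _ hh.ne'
    linarith

lemma strip_le {c : ℝ × ℝ} {b : ℝ} (hb : 0 < b) {k : ℕ} (hk : 1 ≤ k) {p : ℝ × ℝ}
    (hp : p ∈ square c b) : stripIdx c (b / k) p ≤ k := by
  have hkR : (0 : ℝ) < k := by exact_mod_cast hk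
  have hh : (0 : ℝ) < b / k := div_pos hb hkR
  have : (p.2 - c.2) / (b / k) ≤ k := by
    rw [div_le_iff₀ hh]
    have := (sq_mem hp).2.2.2
    have := (sq_mem hp).2.2.1
    rw [mul_div_assoc', mul_comm]
    rw [mul_div_assoc, div_self hkR.ne', mul_one]
    linarith
  calc stripIdx c (b / k) p ≤ ⌊(k : ℝ)⌋₊ := Nat.floor_le_floor this
    _ = k := Nat.floor_natCast k

/-- master strips bound for a sorted tour -/
lemma strips_tour {c : ℝ × ℝ} {b : ℝ} (hb : 0 < b) (k : ℕ) (hk : 1 ≤ k)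
    (l : List (ℝ × ℝ)) (hne : l ≠ []) (hmem : ∀ z ∈ l, z ∈ square c b)
    (hsort : l.Pairwise fun p q =>
      2 * b * (stripIdx c (b / k) p) + p.1 ≤ 2 * b * (stripIdx c (b / k) q) + q.1) :
    tourLength l ≤ 2 * b * k + 3 * b + l.length * (b / k) := by
  have hkR : (0 : ℝ) < k := by exact_mod_cast hk
  have hh : (0 : ℝ) < b / k := div_pos hb hkR
  set h : ℝ := b / k with hhdef
  set φ : ℝ × ℝ → ℝ := fun p =>
    2 * b * (stripIdx c h p) + p.1 + h * (stripIdx c h p) with hφ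
  -- chain' bound
  have hpair : l.Pairwise fun u v => dist u v ≤ φ v - φ u + h := by
    refine hsort.imp_of_mem ?_
    intro u v hu hv huv
    have hu' := hmem u hu
    have hv' := hmem v hv
    obtain ⟨h1, h2⟩ := strip_facts hh hu'
    obtain ⟨h3, h4⟩ := strip_facts hh hv'
    exact edge_bound hb hh hu' hv' h1 h2 h3 h4 huv
  have hchain := hpair.isChain
  cases l with
  | nil => exact absurd rfl hne
  | cons p t =>
    have hlast_mem : t.getLastD p ∈ p :: t := List.getLastD_mem_cons
    have hlast_sq := hmem _ hlast_mem
    have hp_sq := hmem p (by simp)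
    have htele := pLen_telescope φ h t p hchain
    -- φ bounds
    have hφbound : ∀ z ∈ (p :: t), φ z ≤ 2 * b * k + c.1 + b + b := by
      intro z hz
      have hz' := hmem z hz
      have hs : stripIdx c h z ≤ k := strip_le hb hk hz'
      have hsR : (stripIdx c h z : ℝ) ≤ k := by exact_mod_cast hs
      have hx := (sq_mem hz').2.1
      have hhk : h * k = b := by
        rw [hhdef]; field_simp
      have : h * (stripIdx c h z) ≤ b := by
        have := mul_le_mul_of_nonneg_left hsR hh.le
        linarith
      simp only [hφ]
      nlinarith [hsR, hx, this, hb]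
    have hφlow : ∀ z ∈ (p :: t), c.1 ≤ φ z := by
      intro z hz
      have hz' := hmem z hz
      have hx := (sq_mem hz').1
      simp only [hφ]
      have h1 : 0 ≤ 2 * b * (stripIdx c h z : ℝ) := by positivity
      have h2 : 0 ≤ h * (stripIdx c h z : ℝ) := by positivity
      linarith
    have hd : dist (t.getLastD p) p ≤ b := dist_le_side hlast_sq hp_sq
    have heq : tourLength (p :: t) = pLen (p :: t) + dist (t.getLastD p) p := by
      rw [tourLength_eq (p :: t) (by simp)]
      exact pLen_append_last t p p
    have hlen : (t.length : ℝ) * h ≤ (p :: t).length * h := by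
      have : (t.length : ℝ) ≤ (p :: t).length := by
        simp only [List.length_cons]; push_cast; linarith
      exact mul_le_mul_of_nonneg_right this hh.le
    have hA := hφbound _ hlast_mem
    have hB := hφlow p (by simp)
    rw [heq]
    calc pLen (p :: t) + dist (t.getLastD p) p
        ≤ (φ (t.getLastD p) - φ p + t.length * h) + b := add_le_add htele hd
      _ ≤ ((2 * b * k + c.1 + b + b) - c.1 + (p :: t).length * h) + b := by linarith
      _ = 2 * b * k + 3 * b + (p :: t).length * h := by ring

lemma tour_le_len {c : ℝ × ℝ} {b : ℝ} (hb : 0 < b) (l : List (ℝ × ℝ)) (hne : l ≠ [])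
    (hmem : ∀ z ∈ l, z ∈ square c b) : tourLength l ≤ l.length * b := by
  cases l with
  | nil => exact absurd rfl hne
  | cons p t =>
    have h1 : pLen (p :: t) ≤ t.length * b :=
      pLen_le_len b (square c b) (fun u hu v hv => dist_le_side hu hv) t p hmem
    have h2 : dist (t.getLastD p) p ≤ b :=
      dist_le_side (hmem _ List.getLastD_mem_cons) (hmem p (by simp))
    rw [tourLength_eq (p :: t) (by simp)]
    show pLen (p :: t ++ [p]) ≤ _
    rw [pLen_append_last t p p]
    simp only [List.length_cons]
    push_cast
    linarith


/-- strips method, (2.2): monotonicity of the TSP length and the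
upper bound `5 b sqrt a` for `a` points in a square of side `b`. -/
theorem tsp_monotone_and_strips_bound
    (a : ℕ) (ha : 3 ≤ a) (c : ℝ × ℝ) (b : ℝ) (hb : 0 < b)
    (x : Fin a → ℝ × ℝ) (hx : ∀ i, x i ∈ square c b) :
    (∀ (j : ℕ), 3 ≤ j → ∀ hj : j ≤ a,
      tspLength (Finset.univ.image fun i : Fin j => x (Fin.castLE hj i)) ≤
        tspLength (Finset.univ.image x)) ∧
    tspLength (Finset.univ.image x) ≤ 5 * b * Real.sqrt a := by
  set P : Finset (ℝ × ℝ) := Finset.univ.image x with hP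
  have hPmem : ∀ z ∈ P, z ∈ square c b := by
    intro z hz
    rw [hP, Finset.mem_image] at hz
    obtain ⟨i, -, rfl⟩ := hz
    exact hx i
  have hPcard : P.card ≤ a := by
    calc P.card ≤ (Finset.univ : Finset (Fin a)).card := Finset.card_image_le
      _ = a := by simp
  have hPne : P.Nonempty := by
    refine ⟨x ⟨0, by omega⟩, ?_⟩
    rw [hP]; exact Finset.mem_image_of_mem x (Finset.mem_univ _)
  constructor
  · -- monotonicity
    intro j hj3 hj
    set Q : Finset (ℝ × ℝ) := Finset.univ.image fun i : Fin j => x (Fin.castLE hj i) with hQ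
    have hQP : Q ⊆ P := by
      intro z hz
      rw [hQ, Finset.mem_image] at hz
      obtain ⟨i, -, rfl⟩ := hz
      rw [hP]; exact Finset.mem_image_of_mem x (Finset.mem_univ _)
    by_cases hc : Q.card ≤ 2
    · rw [show tspLength Q = 0 by rw [tspLength, if_pos hc]]
      exact tspLength_nonneg P
    · push_neg at hc
      have hPc : 2 < P.card := lt_of_lt_of_le hc (Finset.card_le_card hQP)
      rw [show tspLength P = sInf {L : ℝ | ∃ l : List (ℝ × ℝ),
          l.Nodup ∧ l.toFinset = P ∧ L = tourLength l} by rw [tspLength, if_neg (by omega)]]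
      apply le_csInf
      · exact ⟨tourLength P.toList, P.toList, P.nodup_toList, Finset.toList_toFinset P, rfl⟩
      · rintro L ⟨l, hnd, hfin, rfl⟩
        exact tsp_shortcut P Q hQP hc l hnd hfin
  · -- upper bound
    have haR : (0 : ℝ) < a := by exact_mod_cast (by omega : 0 < a)
    have hsa : (0 : ℝ) < Real.sqrt a := Real.sqrt_pos.mpr haR
    by_cases hPc : P.card ≤ 2
    · rw [show tspLength P = 0 by rw [tspLength, if_pos hPc]]
      positivity
    · push_neg at hPc
      by_cases hsmall : a ≤ 25
      · -- trivial bound: n * b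
        have hne : P.toList ≠ [] := by
          intro h
          have := Finset.length_toList P
          rw [h] at this
          simp at this
          omega
        have h1 : tspLength P ≤ tourLength P.toList :=
          tspLength_le_tour P hPc _ P.nodup_toList (Finset.toList_toFinset P)
        have h2 : tourLength P.toList ≤ P.toList.length * b :=
          tour_le_len hb _ hne (fun z hz => hPmem z (by
            rwa [← Finset.mem_toList]))
        have hlen : P.toList.length = P.card := Finset.length_toList P
        have h25 : (a : ℝ) ≤ 25 := by exact_mod_cast hsmall
        have h5 : (a : ℝ) / 5 ≤ Real.sqrt a := by
          rw [Real.le_sqrt (by positivity) (by positivity)]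
          nlinarith
        have hcard' : (P.toList.length : ℝ) ≤ a := by
          rw [hlen]; exact_mod_cast hPcard
        calc tspLength P ≤ tourLength P.toList := h1
          _ ≤ P.toList.length * b := h2
          _ ≤ (a : ℝ) * b := mul_le_mul_of_nonneg_right hcard' hb.le
          _ ≤ 5 * b * Real.sqrt a := by nlinarith
      · -- strips bound
        push_neg at hsmall
        set k : ℕ := ⌈Real.sqrt a⌉₊ with hkdef
        have hk : 1 ≤ k := Nat.ceil_pos.mpr hsa
        set r : (ℝ × ℝ) → (ℝ × ℝ) → Prop := fun p q =>
          2 * b * (stripIdx c (b / k) p) + p.1 ≤ 2 * b * (stripIdx c (b / k) q) + q.1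
          with hrdef
        letI : DecidableRel r := fun p q => Real.decidableLE _ _
        letI : IsTotal (ℝ × ℝ) r := ⟨fun p q => le_total _ _⟩
        letI : IsTrans (ℝ × ℝ) r := ⟨fun p q z h1 h2 => le_trans h1 h2⟩
        set l : List (ℝ × ℝ) := List.insertionSort r P.toList with hldef
        have hperm : List.Perm l P.toList := List.perm_insertionSort r P.toList
        have hnd : l.Nodup := hperm.nodup_iff.mpr P.nodup_toList
        have hfin : l.toFinset = P := by
          rw [List.toFinset_eq_of_perm _ _ hperm, Finset.toList_toFinset]
        have hlenP : l.length = P.card := by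
          rw [hperm.length_eq, Finset.length_toList]
        have hne : l ≠ [] := by
          intro h
          rw [h] at hlenP
          simp at hlenP
          omega
        have hmem : ∀ z ∈ l, z ∈ square c b := by
          intro z hz
          apply hPmem
          rw [← hfin]
          exact List.mem_toFinset.mpr hz
        have hsort : l.Pairwise r := List.pairwise_insertionSort r P.toList
        have hmain := strips_tour hb k hk l hne hmem hsort
        have h1 : tspLength P ≤ tourLength l := tspLength_le_tour P hPc l hnd hfin
        -- arithmetic
        have hkR : (0 : ℝ) < k := by exact_mod_cast hk
        have hk1 : Real.sqrt a ≤ k := Nat.le_ceil _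
        have hk2 : (k : ℝ) < Real.sqrt a + 1 := Nat.ceil_lt_add_one hsa.le
        have hsa5 : (5 : ℝ) ≤ Real.sqrt a := by
          rw [Real.le_sqrt (by norm_num) (by positivity)]
          have h26 : (25 : ℝ) < a := by exact_mod_cast hsmall
          nlinarith
        have hnle : (l.length : ℝ) ≤ a := by
          rw [hlenP]; exact_mod_cast hPcard
        have hd1 : (l.length : ℝ) * (b / k) ≤ (a : ℝ) * (b / k) :=
          mul_le_mul_of_nonneg_right hnle (by positivity)
        have hd2 : (a : ℝ) * (b / k) ≤ (a : ℝ) * (b / Real.sqrt a) := by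
          apply mul_le_mul_of_nonneg_left _ haR.le
          exact div_le_div_of_nonneg_left hb.le hsa hk1
        have hd3 : (a : ℝ) * (b / Real.sqrt a) = b * Real.sqrt a := by
          have hss : Real.sqrt a ^ 2 = (a : ℝ) := Real.sq_sqrt haR.le
          field_simp
          linear_combination (-1 : ℝ) * hss
        calc tspLength P ≤ tourLength l := h1
          _ ≤ 2 * b * k + 3 * b + l.length * (b / k) := hmain
          _ ≤ 2 * b * (Real.sqrt a + 1) + 3 * b + b * Real.sqrt a := by nlinarith
          _ ≤ 5 * b * Real.sqrt a := by nlinarith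

end
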